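/- Let M ≥ 1, let λ₁ ≥ ⋯ ≥ λ_M be real numbers, and let v₁, …, v_M be the rows of an orthogonal family of unit vectors in ℝ^N. Define G_{ij}(z) = ∑_{k=1}^{M} v_k(i) v_k(j) / (λ_k − z) for z = E + iη with η > 0, and s(z) = (1/M)∑_{k=1}^M 1/(λ_k − z). Then for all i, j: |G_{ij}(E + iη)| ≤ 4 N · (max_{k,l} |v_k(l)|²) · (1 + ∑_{n=0}^{⌈log₂ η^{−1}⌉} Im s(E + i·2ⁿ η)), provided η ≤ 1. -/

import Mathlib

open Complex

lemma exists_n_aux (x η : ℝ) (hη : 0 < η) (hx : |x| ≤ 1) :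
    ∃ n ∈ Finset.range (⌈Real.logb 2 η⁻¹⌉₊ + 1),
      (Real.sqrt (x^2+η^2))⁻¹ ≤ 4 * ((2^n*η)/(x^2+(2^n*η)^2)) := by
  by_cases hxη : |x| ≤ η
  · refine ⟨0, Finset.mem_range.2 (Nat.succ_pos _), ?_⟩
    have hpos : (0:ℝ) < x^2 + η^2 := by positivity
    have h1 : η ≤ Real.sqrt (x^2+η^2) := by
      have := Real.sqrt_le_sqrt (show η^2 ≤ x^2+η^2 by nlinarith [sq_nonneg x])
      rwa [Real.sqrt_sq hη.le] at this
    have h2 : (Real.sqrt (x^2+η^2))⁻¹ ≤ η⁻¹ := inv_anti₀ hη h1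
    have hx2 : x^2 ≤ η^2 := by nlinarith [abs_nonneg x, _root_.sq_abs x]
    have h3 : (1:ℝ)/η ≤ (4*η)/(x^2+η^2) := by
      rw [div_le_div_iff₀ hη hpos]; nlinarith
    calc (Real.sqrt (x^2+η^2))⁻¹ ≤ η⁻¹ := h2
      _ = 1/η := (one_div η).symm
      _ ≤ (4*η)/(x^2+η^2) := h3
      _ = 4 * ((2^0*η)/(x^2+(2^0*η)^2)) := by ring_nf
  · push_neg at hxη
    have hxpos : 0 < |x| := hη.trans hxη
    set r : ℝ := |x| / η with hr
    have hr1 : 1 < r := (one_lt_div hη).2 hxη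
    have hlogpos : 0 < Real.logb 2 r := Real.logb_pos one_lt_two hr1
    set n : ℕ := ⌈Real.logb 2 r⌉₊ with hn
    refine ⟨n, Finset.mem_range.2 ?_, ?_⟩
    · have hle : Real.logb 2 r ≤ Real.logb 2 η⁻¹ := by
        apply Real.logb_le_logb_of_le one_lt_two (by positivity)
        rw [hr, div_le_iff₀ hη]
        calc |x| ≤ 1 := hx
          _ = η⁻¹ * η := by field_simp
      exact Nat.lt_succ_of_le (Nat.ceil_le_ceil hle)
    · have h2n : r ≤ (2:ℝ)^n := by
        calc r = (2:ℝ) ^ (Real.logb 2 r) := (Real.rpow_logb two_pos (by norm_num) (by positivity)).symm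
          _ ≤ (2:ℝ) ^ ((n:ℝ)) := Real.rpow_le_rpow_of_exponent_le one_le_two (Nat.le_ceil _)
          _ = (2:ℝ)^n := by rw [Real.rpow_natCast]
      have h2n' : (2:ℝ)^n ≤ 2*r := by
        have hc : (n:ℝ) ≤ Real.logb 2 r + 1 := by
          have := Nat.ceil_lt_add_one hlogpos.le
          exact_mod_cast this.le
        calc (2:ℝ)^n = (2:ℝ)^((n:ℝ)) := by rw [Real.rpow_natCast]
          _ ≤ (2:ℝ)^(Real.logb 2 r + 1) := Real.rpow_le_rpow_of_exponent_le one_le_two hc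
          _ = 2*r := by
            rw [Real.rpow_add two_pos, Real.rpow_logb two_pos (by norm_num) (by positivity)]
            ring
      set t : ℝ := 2^n * η with ht
      have htpos : 0 < t := by positivity
      have hrη : r * η = |x| := by rw [hr]; field_simp
      have hxt : |x| ≤ t := by rw [← hrη, ht]; nlinarith
      have htx : t ≤ 2*|x| := by rw [ht]; nlinarith
      have hs : (Real.sqrt (x^2+η^2))⁻¹ ≤ |x|⁻¹ := by
        apply inv_anti₀ hxpos
        have := Real.sqrt_le_sqrt (show x^2 ≤ x^2+η^2 by nlinarith [sq_nonneg η])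
        rwa [Real.sqrt_sq_eq_abs] at this
      have hpos2 : (0:ℝ) < x^2 + t^2 := by positivity
      have hx2 : x^2 ≤ t^2 := by nlinarith [_root_.sq_abs x]
      have h3 : (1:ℝ)/|x| ≤ (4*t)/(x^2+t^2) := by
        rw [div_le_div_iff₀ hxpos hpos2]; nlinarith [_root_.sq_abs x]
      calc (Real.sqrt (x^2+η^2))⁻¹ ≤ |x|⁻¹ := hs
        _ = 1/|x| := (one_div _).symm
        _ ≤ (4*t)/(x^2+t^2) := h3
        _ = 4 * (t/(x^2+t^2)) := by ring

lemma im_inv_aux (a E t : ℝ) :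
    (((a:ℂ) - ((E:ℂ) + (t:ℂ)*Complex.I))⁻¹).im = t / ((a-E)^2 + t^2) := by
  rw [Complex.inv_im]
  simp [Complex.normSq_apply]
  ring_nf

lemma key_bound_aux (x η : ℝ) (hη : 0 < η) :
    (Real.sqrt (x^2+η^2))⁻¹ ≤
      1 + 4 * ∑ n ∈ Finset.range (⌈Real.logb 2 η⁻¹⌉₊ + 1), (2^n*η)/(x^2+(2^n*η)^2) := by
  have hterm : ∀ n ∈ Finset.range (⌈Real.logb 2 η⁻¹⌉₊ + 1),
      (0:ℝ) ≤ (2^n*η)/(x^2+(2^n*η)^2) := fun n _ => by positivity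
  have hsum : (0:ℝ) ≤ ∑ n ∈ Finset.range (⌈Real.logb 2 η⁻¹⌉₊ + 1), (2^n*η)/(x^2+(2^n*η)^2) :=
    Finset.sum_nonneg hterm
  by_cases hx : |x| ≤ 1
  · obtain ⟨n, hn, hle⟩ := exists_n_aux x η hη hx
    have h2 : (2^n*η)/(x^2+(2^n*η)^2) ≤
        ∑ m ∈ Finset.range (⌈Real.logb 2 η⁻¹⌉₊ + 1), (2^m*η)/(x^2+(2^m*η)^2) :=
      Finset.single_le_sum hterm hn
    nlinarith
  · push_neg at hx
    have h1 : 1 ≤ Real.sqrt (x^2+η^2) := by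
      have := Real.sqrt_le_sqrt (show x^2 ≤ x^2+η^2 by nlinarith [sq_nonneg η])
      rw [Real.sqrt_sq_eq_abs] at this
      linarith
    have : (Real.sqrt (x^2+η^2))⁻¹ ≤ 1 := by
      rw [inv_le_one_iff₀]; right; exact h1
    linarith

/-- Dyadic decomposition bound for Green's function entries: with
`G_{ij}(z) = ∑_k v_k(i) v_k(j)/(λ_k − z)` and `s(z) = (1/M) ∑_k 1/(λ_k − z)`, for
`z = E + iη`, `0 < η ≤ 1`, and `B` a bound on `max_{k,l} |v_k(l)|²`,
`|G_{ij}| ≤ 4 N B (1 + ∑_{n=0}^{⌈log₂ η⁻¹⌉} Im s(E + i 2ⁿ η))`. -/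
theorem stmt_10 {M N : ℕ} (hM : 1 ≤ M) (hMN : M ≤ N)
    (lam : Fin M → ℝ) (v : Fin M → Fin N → ℝ)
    (horth : ∀ k l : Fin M, ∑ i, v k i * v l i = if k = l then (1 : ℝ) else 0)
    (E η : ℝ) (hη : 0 < η) (hη1 : η ≤ 1) (B : ℝ)
    (hB : ∀ (k : Fin M) (i : Fin N), |v k i| ^ 2 ≤ B) (i j : Fin N) :
    ‖∑ k, ((v k i * v k j : ℝ) : ℂ) /
        (((lam k : ℝ) : ℂ) - ((E : ℂ) + (η : ℂ) * Complex.I))‖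
      ≤ 4 * N * B * (1 + ∑ n ∈ Finset.range (⌈Real.logb 2 η⁻¹⌉₊ + 1),
          (((M : ℂ))⁻¹ * ∑ k, (((lam k : ℝ) : ℂ) -
            ((E : ℂ) + ((2 ^ n * η : ℝ) : ℂ) * Complex.I))⁻¹).im) := by
  set R := Finset.range (⌈Real.logb 2 η⁻¹⌉₊ + 1) with hR
  set f : Fin M → ℕ → ℝ := fun k n => (2^n*η)/((lam k - E)^2+(2^n*η)^2) with hf
  have hB0 : 0 ≤ B := le_trans (by positivity) (hB ⟨0, hM⟩ i)
  -- Step 1: rewrite the imaginary parts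
  have him : ∀ n, (((M : ℂ))⁻¹ * ∑ k, (((lam k : ℝ) : ℂ) -
      ((E : ℂ) + ((2 ^ n * η : ℝ) : ℂ) * Complex.I))⁻¹).im
      = (M:ℝ)⁻¹ * ∑ k, f k n := by
    intro n
    rw [show ((M:ℂ))⁻¹ = (((M:ℝ)⁻¹ : ℝ):ℂ) by push_cast; ring, Complex.ofReal_mul',
      Complex.im_sum]
    show (M:ℝ)⁻¹ * _ = _
    congr 1
    apply Finset.sum_congr rfl
    intro k _
    exact im_inv_aux (lam k) E (2^n*η)
  -- Step 2: pointwise bound on the absolute values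
  have habs : ∀ k : Fin M, ‖((v k i * v k j : ℝ) : ℂ) /
        (((lam k : ℝ) : ℂ) - ((E : ℂ) + (η : ℂ) * Complex.I))‖
      ≤ B * (Real.sqrt ((lam k - E)^2 + η^2))⁻¹ := by
    intro k
    have hden : ‖((lam k : ℝ) : ℂ) - ((E : ℂ) + (η : ℂ) * Complex.I)‖
        = Real.sqrt ((lam k - E)^2 + η^2) := by
      rw [Complex.norm_def, Complex.normSq_apply]
      simp
      ring_nf
    rw [norm_div, Complex.norm_real, Real.norm_eq_abs, hden, div_eq_mul_inv]
    have hnum : |v k i * v k j| ≤ B := by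
      rw [abs_mul]
      nlinarith [hB k i, hB k j, sq_nonneg (|v k i| - |v k j|), abs_nonneg (v k i),
        abs_nonneg (v k j)]
    exact mul_le_mul_of_nonneg_right hnum (by positivity)
  -- Step 3: per-k dyadic bound
  have hkey : ∀ k : Fin M, (Real.sqrt ((lam k - E)^2 + η^2))⁻¹ ≤ 1 + 4 * ∑ n ∈ R, f k n :=
    fun k => key_bound_aux (lam k - E) η hη
  -- positivity of the dyadic sums
  have hfpos : ∀ (k : Fin M) (n : ℕ), 0 ≤ f k n := fun k n => by
    simp only [hf]; positivity
  have hFpos : (0:ℝ) ≤ ∑ n ∈ R, ∑ k, f k n :=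
    Finset.sum_nonneg fun n _ => Finset.sum_nonneg fun k _ => hfpos k n
  -- assemble
  calc ‖∑ k, ((v k i * v k j : ℝ) : ℂ) /
        (((lam k : ℝ) : ℂ) - ((E : ℂ) + (η : ℂ) * Complex.I))‖
      ≤ ∑ k, ‖((v k i * v k j : ℝ) : ℂ) /
        (((lam k : ℝ) : ℂ) - ((E : ℂ) + (η : ℂ) * Complex.I))‖ := norm_sum_le _ _
    _ ≤ ∑ k, B * (Real.sqrt ((lam k - E)^2 + η^2))⁻¹ :=
        Finset.sum_le_sum fun k _ => habs k
    _ ≤ ∑ k : Fin M, B * (1 + 4 * ∑ n ∈ R, f k n) :=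
        Finset.sum_le_sum fun k _ => mul_le_mul_of_nonneg_left (hkey k) hB0
    _ = B * (M + 4 * ∑ n ∈ R, ∑ k, f k n) := by
        rw [← Finset.mul_sum, Finset.sum_add_distrib, ← Finset.mul_sum, Finset.sum_comm]
        simp only [Finset.sum_const, Finset.card_univ, Fintype.card_fin, nsmul_eq_mul]
        ring
    _ ≤ B * (4*N + 4*N * ((M:ℝ)⁻¹ * ∑ n ∈ R, ∑ k, f k n)) := by
        apply mul_le_mul_of_nonneg_left _ hB0
        have hM1 : (1:ℝ) ≤ (M:ℝ) := by exact_mod_cast hM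
        have hMN1 : (M:ℝ) ≤ (N:ℝ) := by exact_mod_cast hMN
        have h1 : (M:ℝ) ≤ 4*N := by linarith
        have h2 : 4 * ∑ n ∈ R, ∑ k, f k n ≤ 4*N * ((M:ℝ)⁻¹ * ∑ n ∈ R, ∑ k, f k n) := by
          rw [show (4:ℝ)*N * ((M:ℝ)⁻¹ * ∑ n ∈ R, ∑ k, f k n)
              = 4 * ((N * (M:ℝ)⁻¹) * ∑ n ∈ R, ∑ k, f k n) by ring]
          have hge : (1:ℝ) ≤ (N:ℝ) * (M:ℝ)⁻¹ := by
            rw [← div_eq_mul_inv, le_div_iff₀ (by linarith)]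
            linarith
          nlinarith
        linarith
    _ = 4 * N * B * (1 + ∑ n ∈ R,
          (((M : ℂ))⁻¹ * ∑ k, (((lam k : ℝ) : ℂ) -
            ((E : ℂ) + ((2 ^ n * η : ℝ) : ℂ) * Complex.I))⁻¹).im) := by
        rw [Finset.sum_congr rfl (fun n _ => him n), ← Finset.mul_sum]
        ring
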